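/- Let h : ℕ → ℕ satisfy h(n) ≥ 1 for all n, limsup_n h(n) = ∞, and h(a+b) ≥ h(a)·h(b) for all a, b ∈ ℕ, and let c ∈ (0,1). Then for every F ⊆ ω^ω: F ∈ fE(h) if and only if there are a partition of ℕ into consecutive nonempty finite intervals (I_n)_{n∈ℕ} and sets J_n ⊆ ω^{I_n} with |J_n|/h(|I_n|) < c for every n such that F ⊆ {x ∈ ω^ω : x↾I_n ∈ J_n for all but finitely many n}. -/

import Mathlib

open Filter Set

/-- The basic clopen set `[σ]` in the Baire space determined by a finite sequence `σ`. -/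
def cylinder (σ : List ℕ) : Set (ℕ → ℕ) :=
  {x | ∀ i : Fin σ.length, x i = σ.get i}

/-- `limsup_n h(n) = ∞`, i.e. `h` takes arbitrarily large values frequently. -/
def LimsupInfty (h : ℕ → ℕ) : Prop :=
  ∀ m : ℕ, ∃ᶠ n in Filter.atTop, m ≤ h n

/-- The family `fN(h)` of fake null sets: `F ∈ fN(h)` iff for every `ε > 0` there is a
sequence of finite sequences `σ_n` with `∑ 1/h(|σ_n|) < ε` covering `F`. -/
def fN (h : ℕ → ℕ) (F : Set (ℕ → ℕ)) : Prop :=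
  ∀ ε : ℝ, 0 < ε →
    ∃ σ : ℕ → List ℕ,
      Summable (fun n => (1 : ℝ) / (h (σ n).length : ℝ)) ∧
      (∑' n, (1 : ℝ) / (h (σ n).length : ℝ)) < ε ∧
      F ⊆ ⋃ n, cylinder (σ n)

/-- The restriction of `x` to the interval `[l, u)`, extended by `0` elsewhere. -/
def restrIco (x : ℕ → ℕ) (l u : ℕ) : ℕ → ℕ :=
  fun i => if l ≤ i ∧ i < u then x i else 0

/-- `J` is a set of patterns on the interval `[l, u)`: every element vanishes off `[l, u)`. -/
def SuppIco (l u : ℕ) (J : Set (ℕ → ℕ)) : Prop :=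
  ∀ σ ∈ J, ∀ i, ¬ (l ≤ i ∧ i < u) → σ i = 0

/-- The family `fE(h)`: partition `ℕ` into consecutive nonempty intervals `I_n = [a n, a (n+1))`
(`a 0 = 0`, `a` strictly increasing), patterns `J_n ⊆ ω^{I_n}` with `∑ |J_n|/h(|I_n|) < ∞`,
and `F ⊆ {x : x↾I_n ∈ J_n for all but finitely many n}`. -/
def fE (h : ℕ → ℕ) (F : Set (ℕ → ℕ)) : Prop :=
  ∃ a : ℕ → ℕ, a 0 = 0 ∧ StrictMono a ∧
    ∃ J : ℕ → Set (ℕ → ℕ),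
      (∀ n, SuppIco (a n) (a (n+1)) (J n)) ∧
      (∀ n, (J n).Finite) ∧
      Summable (fun n => ((J n).ncard : ℝ) / (h (a (n+1) - a n) : ℝ)) ∧
      F ⊆ {x | ∀ᶠ n in Filter.atTop, restrIco x (a n) (a (n+1)) ∈ J n}

/-- The family `fS(h)` of fake small sets: as `fE(h)` but with
`x↾I_n ∈ J_n` for infinitely many `n`. -/
def fS (h : ℕ → ℕ) (F : Set (ℕ → ℕ)) : Prop :=
  ∃ a : ℕ → ℕ, a 0 = 0 ∧ StrictMono a ∧
    ∃ J : ℕ → Set (ℕ → ℕ),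
      (∀ n, SuppIco (a n) (a (n+1)) (J n)) ∧
      (∀ n, (J n).Finite) ∧
      Summable (fun n => ((J n).ncard : ℝ) / (h (a (n+1) - a n) : ℝ)) ∧
      F ⊆ {x | ∃ᶠ n in Filter.atTop, restrIco x (a n) (a (n+1)) ∈ J n}

/-- The family `fE(Fin)`: as `fE(h)` but one only requires each pattern set `J_n` to be finite. -/
def fEFin (F : Set (ℕ → ℕ)) : Prop :=
  ∃ a : ℕ → ℕ, a 0 = 0 ∧ StrictMono a ∧
    ∃ J : ℕ → Set (ℕ → ℕ),
      (∀ n, SuppIco (a n) (a (n+1)) (J n)) ∧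
      (∀ n, (J n).Finite) ∧
      F ⊆ {x | ∀ᶠ n in Filter.atTop, restrIco x (a n) (a (n+1)) ∈ J n}

/-- The family `fS(Fin)`: as `fS(h)` but one only requires each pattern set `J_n` to be finite. -/
def fSFin (F : Set (ℕ → ℕ)) : Prop :=
  ∃ a : ℕ → ℕ, a 0 = 0 ∧ StrictMono a ∧
    ∃ J : ℕ → Set (ℕ → ℕ),
      (∀ n, SuppIco (a n) (a (n+1)) (J n)) ∧
      (∀ n, (J n).Finite) ∧
      F ⊆ {x | ∃ᶠ n in Filter.atTop, restrIco x (a n) (a (n+1)) ∈ J n}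

/-- The family `fN(Fin)`: there are finite `S_n ⊆ ω^n` with
`F ⊆ {x : x↾n ∈ S_n for infinitely many n}`. -/
def fNFin (F : Set (ℕ → ℕ)) : Prop :=
  ∃ S : (n : ℕ) → Set (Fin n → ℕ),
    (∀ n, (S n).Finite) ∧
    F ⊆ {x | ∃ᶠ n in Filter.atTop, (fun i : Fin n => x i) ∈ S n}

/-- The σ-ideal `M_-`: there are `x_F ∈ ω^ω` and a partition of `ℕ` into consecutive nonempty
intervals `I_n = [a n, a (n+1))` with `F ⊆ {x : x↾I_n ≠ x_F↾I_n for all but finitely many n}`. -/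
def Mminus (F : Set (ℕ → ℕ)) : Prop :=
  ∃ xF : ℕ → ℕ, ∃ a : ℕ → ℕ, a 0 = 0 ∧ StrictMono a ∧
    F ⊆ {x | ∀ᶠ n in Filter.atTop, ∃ i, a n ≤ i ∧ i < a (n+1) ∧ x i ≠ xF i}

lemma restr_restr {x : ℕ → ℕ} {L U l u : ℕ} (hL : L ≤ l) (hU : u ≤ U) :
    restrIco (restrIco x L U) l u = restrIco x l u := by
  funext i
  simp only [restrIco]
  by_cases hi : l ≤ i ∧ i < u
  · have h2 : L ≤ i ∧ i < U := ⟨hL.trans hi.1, hi.2.trans_le hU⟩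
    simp [hi, h2]
  · simp [hi]

def patK (a : ℕ → ℕ) (J : ℕ → Set (ℕ → ℕ)) (p q : ℕ) : Set (ℕ → ℕ) :=
  {σ | (∀ i, ¬ (a p ≤ i ∧ i < a q) → σ i = 0) ∧
    ∀ i, p ≤ i → i < q → restrIco σ (a i) (a (i+1)) ∈ J i}

lemma ncard_prod (S T : Set (ℕ → ℕ)) : (S ×ˢ T).ncard = S.ncard * T.ncard := by
  rw [← Nat.card_coe_set_eq, ← Nat.card_coe_set_eq, ← Nat.card_coe_set_eq,
    Nat.card_congr (Equiv.Set.prod S T), Nat.card_prod]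

lemma patK_card (a : ℕ → ℕ) (ha : Monotone a) (J : ℕ → Set (ℕ → ℕ))
    (hfin : ∀ n, (J n).Finite) (p : ℕ) : ∀ m : ℕ,
    (patK a J p (p+m)).Finite ∧
      (patK a J p (p+m)).ncard ≤ ∏ i ∈ Finset.Ico p (p+m), (J i).ncard := by
  intro m
  induction m with
  | zero =>
    have hsub : patK a J p (p+0) ⊆ {fun _ => 0} := by
      intro σ hσ
      simp only [mem_singleton_iff]
      funext i
      exact hσ.1 i (by rw [Nat.add_zero]; omega)
    exact ⟨(Set.finite_singleton _).subset hsub,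
      by simpa using Set.ncard_le_ncard hsub (Set.finite_singleton _)⟩
  | succ m ih =>
    have hq : p + (m+1) = (p+m)+1 := rfl
    set q := p + m with hqdef
    set f : (ℕ → ℕ) → (ℕ → ℕ) × (ℕ → ℕ) :=
      fun σ => (restrIco σ (a p) (a q), restrIco σ (a q) (a (q+1))) with hf
    have haq : a p ≤ a q := ha (by omega)
    have haq1 : a q ≤ a (q+1) := ha (by omega)
    have hmaps : ∀ σ ∈ patK a J p (q+1), f σ ∈ (patK a J p q) ×ˢ (J q) := by
      intro σ hσ
      refine ⟨⟨fun i hi => by simp [hf, restrIco, hi], fun i hpi hiq => ?_⟩, ?_⟩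
      · rw [restr_restr (ha hpi) (ha hiq)]
        exact hσ.2 i hpi (by omega)
      · exact hσ.2 q (by omega) (by omega)
    have hinj : Set.InjOn f (patK a J p (q+1)) := by
      intro σ hσ τ hτ hfe
      have h1 := congrArg Prod.fst hfe
      have h2 := congrArg Prod.snd hfe
      simp only [hf] at h1 h2
      funext i
      by_cases hi1 : a p ≤ i ∧ i < a q
      · have := congrFun h1 i
        simpa only [restrIco, if_pos hi1] using this
      · by_cases hi2 : a q ≤ i ∧ i < a (q+1)
        · have := congrFun h2 i
          simpa only [restrIco, if_pos hi2] using this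
        · have hout : ¬ (a p ≤ i ∧ i < a (q+1)) := by omega
          rw [hσ.1 i hout, hτ.1 i hout]
    have hprod : ((patK a J p q) ×ˢ (J q)).Finite := ih.1.prod (hfin q)
    have hfin' : (patK a J p (q+1)).Finite :=
      Set.Finite.of_finite_image (hprod.subset (Set.image_subset_iff.mpr hmaps)) hinj
    rw [hq]
    refine ⟨hfin', ?_⟩
    calc (patK a J p (q+1)).ncard ≤ ((patK a J p q) ×ˢ (J q)).ncard :=
          Set.ncard_le_ncard_of_injOn f hmaps hinj hprod
      _ = (patK a J p q).ncard * (J q).ncard := ncard_prod _ _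
      _ ≤ (∏ i ∈ Finset.Ico p q, (J i).ncard) * (J q).ncard :=
          Nat.mul_le_mul_right _ ih.2
      _ = ∏ i ∈ Finset.Ico p (q+1), (J i).ncard :=
          (Finset.prod_Ico_succ_top (by omega) _).symm

lemma hprod_le (h : ℕ → ℕ) (h1 : ∀ n, 1 ≤ h n) (hsm : ∀ a b, h a * h b ≤ h (a+b))
    (a : ℕ → ℕ) (ha : Monotone a) (p : ℕ) : ∀ m,
    ∏ i ∈ Finset.Ico p (p+m), h (a (i+1) - a i) ≤ h (a (p+m) - a p) := by
  intro m
  induction m with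
  | zero => simpa using h1 (a (p+0) - a p)
  | succ m ih =>
    have e : p + (m+1) = (p+m)+1 := rfl
    rw [e, Finset.prod_Ico_succ_top (by omega)]
    have h2 : a p ≤ a (p+m) := ha (by omega)
    have h3 : a (p+m) ≤ a (p+m+1) := ha (by omega)
    calc _ ≤ h (a (p+m) - a p) * h (a (p+m+1) - a (p+m)) := Nat.mul_le_mul ih le_rfl
      _ ≤ h ((a (p+m) - a p) + (a (p+m+1) - a (p+m))) := hsm _ _
      _ = h (a (p+m+1) - a p) := by congr 1; omega

lemma patK_ratio (h : ℕ → ℕ) (h1 : ∀ n, 1 ≤ h n) (hsm : ∀ a b, h a * h b ≤ h (a+b))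
    (a : ℕ → ℕ) (ha : Monotone a) (J : ℕ → Set (ℕ → ℕ)) (hfin : ∀ n, (J n).Finite)
    (p q : ℕ) (hpq : p ≤ q) :
    ((patK a J p q).ncard : ℝ) / (h (a q - a p) : ℝ) ≤
      ∏ i ∈ Finset.Ico p q, ((J i).ncard : ℝ) / (h (a (i+1) - a i) : ℝ) := by
  obtain ⟨m, rfl⟩ := le_iff_exists_add.mp hpq
  have hK := (patK_card a ha J hfin p m).2
  have hH := hprod_le h h1 hsm a ha p m
  have hBpos : 0 < ∏ i ∈ Finset.Ico p (p+m), h (a (i+1) - a i) :=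
    Finset.prod_pos (fun i _ => h1 _)
  have key : ((patK a J p (p+m)).ncard : ℝ) / (h (a (p+m) - a p) : ℝ) ≤
      ((∏ i ∈ Finset.Ico p (p+m), (J i).ncard : ℕ) : ℝ) /
      ((∏ i ∈ Finset.Ico p (p+m), h (a (i+1) - a i) : ℕ) : ℝ) := by
    apply div_le_div₀ (by positivity) (by exact_mod_cast hK) (by exact_mod_cast hBpos)
      (by exact_mod_cast hH)
  refine key.trans_eq ?_
  push_cast
  rw [Finset.prod_div_distrib]

lemma patK_cover (a : ℕ → ℕ) (ha : Monotone a) (J : ℕ → Set (ℕ → ℕ)) (b : ℕ → ℕ)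
    (hb : StrictMono b) (x : ℕ → ℕ)
    (hx : ∀ᶠ i in atTop, restrIco x (a i) (a (i+1)) ∈ J i) :
    ∀ᶠ n in atTop, restrIco x (a (b n)) (a (b (n+1))) ∈ patK a J (b n) (b (n+1)) := by
  obtain ⟨N, hN⟩ := eventually_atTop.mp hx
  refine eventually_atTop.mpr ⟨N, fun n hn => ?_⟩
  have hbn : N ≤ b n := hn.trans hb.le_apply
  refine ⟨fun i hi => by simp [restrIco, hi], fun i hi1 hi2 => ?_⟩
  rw [restr_restr (ha hi1) (ha hi2)]
  exact hN i (hbn.trans hi1)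

def tri : ℕ → ℕ
  | 0 => 0
  | n+1 => tri n + n + 1

lemma tri_mono : StrictMono tri :=
  strictMono_nat_of_lt_succ (fun n => by simp only [tri]; omega)

lemma patK_finite (a : ℕ → ℕ) (ha : Monotone a) (J : ℕ → Set (ℕ → ℕ))
    (hfin : ∀ n, (J n).Finite) (p q : ℕ) (hpq : p ≤ q) : (patK a J p q).Finite := by
  have := (patK_card a ha J hfin p (q - p)).1
  rwa [Nat.add_sub_cancel' hpq] at this

theorem stmt1 (h : ℕ → ℕ) (h1 : ∀ n, 1 ≤ h n) (hlim : LimsupInfty h)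
    (hsm : ∀ a b : ℕ, h a * h b ≤ h (a + b)) (c : ℝ) (hc0 : 0 < c) (hc1 : c < 1)
    (F : Set (ℕ → ℕ)) :
    fE h F ↔
      ∃ a : ℕ → ℕ, a 0 = 0 ∧ StrictMono a ∧
        ∃ J : ℕ → Set (ℕ → ℕ),
          (∀ n, SuppIco (a n) (a (n+1)) (J n)) ∧
          (∀ n, (J n).Finite) ∧
          (∀ n, ((J n).ncard : ℝ) / (h (a (n+1) - a n) : ℝ) < c) ∧
          F ⊆ {x | ∀ᶠ n in Filter.atTop, restrIco x (a n) (a (n+1)) ∈ J n} := by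
  constructor
  · rintro ⟨a, ha0, ha, J, hsupp, hJfin, hsum, hcov⟩
    set r : ℕ → ℝ := fun i => ((J i).ncard : ℝ) / (h (a (i+1) - a i) : ℝ) with hr
    have hrnn : ∀ i, 0 ≤ r i := fun i => by positivity
    obtain ⟨N, hN⟩ := eventually_atTop.mp
      (hsum.tendsto_atTop_zero.eventually (gt_mem_nhds hc0))
    set P : ℝ := ∏ i ∈ Finset.range N, r i with hP
    have hPnn : 0 ≤ P := Finset.prod_nonneg (fun i _ => hrnn i)
    have htend : Tendsto (fun k : ℕ => P * c ^ k) atTop (nhds 0) := by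
      simpa using (tendsto_pow_atTop_nhds_zero_of_lt_one hc0.le hc1).const_mul P
    obtain ⟨k, hkc, hk1⟩ :=
      ((htend.eventually (gt_mem_nhds hc0)).and (eventually_ge_atTop 1)).exists
    set M := N + k with hM
    set b : ℕ → ℕ := fun n => match n with | 0 => 0 | Nat.succ n => M + n with hbdef
    have hb : StrictMono b := strictMono_nat_of_lt_succ (by
      intro n; cases n <;> simp [hbdef] <;> omega)
    have hble : ∀ n, b n ≤ b (n+1) := fun n => (hb (Nat.lt_succ_self n)).le
    refine ⟨fun n => a (b n), by simpa [hbdef] using ha0, ha.comp hb,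
      fun n => patK a J (b n) (b (n+1)), fun n σ hσ => hσ.1,
      fun n => patK_finite a ha.monotone J hJfin _ _ (hble n), fun n => ?_, ?_⟩
    · have hrat := patK_ratio h h1 hsm a ha.monotone J hJfin (b n) (b (n+1)) (hble n)
      refine lt_of_le_of_lt hrat ?_
      match n with
      | 0 =>
        have hIco : Finset.Ico (b 0) (b 1) = Finset.range M := by
          have e0 : b 0 = 0 := rfl
          have e1 : b 1 = M := rfl
          rw [e0, e1, Finset.range_eq_Ico]
        rw [hIco, ← Finset.prod_range_mul_prod_Ico r (show N ≤ M by omega)]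
        have hQ : ∏ i ∈ Finset.Ico N M, r i ≤ c ^ k := by
          calc ∏ i ∈ Finset.Ico N M, r i ≤ ∏ i ∈ Finset.Ico N M, c :=
                Finset.prod_le_prod (fun i _ => hrnn i)
                  (fun i hi => (hN i (Finset.mem_Ico.mp hi).1).le)
            _ = c ^ k := by rw [Finset.prod_const, Nat.card_Ico]; congr 1; omega
        calc P * ∏ i ∈ Finset.Ico N M, r i ≤ P * c ^ k :=
              mul_le_mul_of_nonneg_left hQ hPnn
          _ < c := hkc
      | Nat.succ n =>
        have hIco : Finset.Ico (b (n+1)) (b (n+2)) = {M + n} := by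
          have e1 : b (n+1) = M + n := rfl
          have e2 : b (n+2) = M + n + 1 := rfl
          rw [e1, e2, Nat.Ico_succ_singleton]
        rw [hIco, Finset.prod_singleton]
        exact hN (M + n) (by omega)
    · intro x hx
      exact patK_cover a ha.monotone J b hb x (hcov hx)
  · rintro ⟨a, ha0, ha, J, hsupp, hJfin, hlt, hcov⟩
    set r : ℕ → ℝ := fun i => ((J i).ncard : ℝ) / (h (a (i+1) - a i) : ℝ) with hr
    have hrnn : ∀ i, 0 ≤ r i := fun i => by positivity
    have hble : ∀ n, tri n ≤ tri (n+1) := fun n => (tri_mono (Nat.lt_succ_self n)).le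
    refine ⟨fun n => a (tri n), ha0, ha.comp tri_mono,
      fun n => patK a J (tri n) (tri (n+1)), fun n σ hσ => hσ.1,
      fun n => patK_finite a ha.monotone J hJfin _ _ (hble n), ?_, ?_⟩
    · have hbound : ∀ n, ((patK a J (tri n) (tri (n+1))).ncard : ℝ) /
          (h (a (tri (n+1)) - a (tri n)) : ℝ) ≤ c * c ^ n := by
        intro n
        refine le_trans (patK_ratio h h1 hsm a ha.monotone J hJfin _ _ (hble n)) ?_
        calc ∏ i ∈ Finset.Ico (tri n) (tri (n+1)), r i
            ≤ ∏ i ∈ Finset.Ico (tri n) (tri (n+1)), c :=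
              Finset.prod_le_prod (fun i _ => hrnn i) (fun i _ => (hlt i).le)
          _ = c ^ (n+1) := by
              rw [Finset.prod_const, Nat.card_Ico]
              congr 1
              have : tri (n+1) = tri n + n + 1 := rfl
              omega
          _ = c * c ^ n := by ring
      exact Summable.of_nonneg_of_le (fun n => by positivity) hbound
        ((summable_geometric_of_lt_one hc0.le hc1).mul_left c)
    · intro x hx
      exact patK_cover a ha.monotone J tri tri_mono x (hcov hx)
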